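/- Suppose b is a nontrivial vector in ℝ^V and S is a b-boundable subset. If x ∈ ℝ^V is a solution to the linear system ℒx = b satisfying the boundary condition b, then its restriction x_S to S satisfies x_S = ℒ_S^{-1} b₁, where b₁ ∈ ℝ^S is the vector with b₁(v) = Σ_{u∈δ(S), u∼v} b(u)/√(d_v d_u), i.e., b₁ = D_S^{-1/2} A_{S,δS} D_{δS}^{-1/2} b_{δS}. -/

import Mathlib

open Matrix MeasureTheory

/-- The normalized Laplacian `ℒ = D^{-1/2}(D-A)D^{-1/2}` of a graph. -/
noncomputable def nLap {V : Type} [Fintype V] [DecidableEq V] (G : SimpleGraph V)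
    [DecidableRel G.Adj] : Matrix V V ℝ :=
  Matrix.diagonal (fun v => (Real.sqrt (G.degree v))⁻¹) *
    (Matrix.diagonal (fun v => (G.degree v : ℝ)) - G.adjMatrix ℝ) *
    Matrix.diagonal (fun v => (Real.sqrt (G.degree v))⁻¹)

/-- The submatrix `ℒ_S` of the normalized Laplacian with rows and columns indexed by `S`. -/
noncomputable def nLapS {V : Type} [Fintype V] [DecidableEq V] (G : SimpleGraph V)
    [DecidableRel G.Adj] (S : Finset V) : Matrix S S ℝ :=
  (nLap G).submatrix (fun i => (i : V)) (fun j => (j : V))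

/-- The vertex boundary `δ(S)`. -/
def vBdry {V : Type} [Fintype V] [DecidableEq V] (G : SimpleGraph V)
    [DecidableRel G.Adj] (S : Finset V) : Finset V :=
  Finset.univ.filter (fun u => u ∉ S ∧ ∃ v ∈ S, G.Adj u v)

/-- The spectral (ℓ²-operator) norm of a real square matrix. -/
noncomputable def specNorm {n : Type} [Fintype n] [DecidableEq n] (M : Matrix n n ℝ) : ℝ :=
  ‖LinearMap.toContinuousLinearMap (Matrix.toEuclideanLin M)‖

/-- The Euclidean (L²) norm of a vector. -/
noncomputable def l2norm {n : Type} [Fintype n] (f : n → ℝ) : ℝ := Real.sqrt (∑ i, f i ^ 2)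

/-- The vector `b₁(v) = Σ_{u ∈ δ(S), u ~ v} b(u)/√(d_v d_u)`. -/
noncomputable def bOne {V : Type} [Fintype V] [DecidableEq V] (G : SimpleGraph V)
    [DecidableRel G.Adj] (S : Finset V) (b : V → ℝ) : S → ℝ :=
  fun v => ∑ u ∈ (vBdry G S).filter (fun u => G.Adj u (v : V)),
    b u / Real.sqrt ((G.degree (v : V)) * (G.degree u))

/-- The submatrix `P_S` of the random-walk transition matrix `P = D⁻¹A`. -/
noncomputable def PS {V : Type} [Fintype V] [DecidableEq V] (G : SimpleGraph V)
    [DecidableRel G.Adj] (S : Finset V) : Matrix S S ℝ :=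
  ((Matrix.diagonal (fun v => ((G.degree v : ℝ))⁻¹) * G.adjMatrix ℝ)).submatrix
    (fun i => (i : V)) (fun j => (j : V))

lemma nLap_apply {V : Type} [Fintype V] [DecidableEq V] (G : SimpleGraph V)
    [DecidableRel G.Adj] (u v : V) :
    nLap G u v = (Real.sqrt (G.degree u))⁻¹ *
      ((if u = v then (G.degree u : ℝ) else 0) - (if G.Adj u v then 1 else 0)) *
      (Real.sqrt (G.degree v))⁻¹ := by
  simp [nLap, Matrix.diagonal_mul, Matrix.mul_diagonal, Matrix.sub_apply,
    Matrix.diagonal_apply, SimpleGraph.adjMatrix_apply]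

lemma nLapS_mulVec {V : Type} [Fintype V] [DecidableEq V] (G : SimpleGraph V)
    [DecidableRel G.Adj] (hdeg : ∀ v, 0 < G.degree v) (S : Finset V)
    (y : S → ℝ) (v : S) :
    (nLapS G S).mulVec y v = y v - ∑ u : S,
      (if G.Adj (v : V) (u : V) then 1 else 0) * y u /
        (Real.sqrt (G.degree (v : V)) * Real.sqrt (G.degree (u : V))) := by
  have hs : ∀ w : V, (0:ℝ) < Real.sqrt (G.degree w) := fun w =>
    Real.sqrt_pos.2 (by exact_mod_cast hdeg w)
  have : (nLapS G S).mulVec y v = ∑ u : S, nLap G (v : V) (u : V) * y u := by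
    simp [nLapS, Matrix.mulVec, dotProduct, Matrix.submatrix_apply]
  rw [this]
  have : ∀ u : S, nLap G (v : V) (u : V) * y u =
      (if (v:V) = (u:V) then y u else 0) -
      (if G.Adj (v : V) (u : V) then 1 else 0) * y u /
        (Real.sqrt (G.degree (v : V)) * Real.sqrt (G.degree (u : V))) := by
    intro u
    rw [nLap_apply]
    by_cases h : (v : V) = (u : V)
    · have hadj : ¬ G.Adj (v:V) (u:V) := by rw [h]; exact G.irrefl
      have h2 : G.degree (u:V) = G.degree (v:V) := by rw [h]
      have h3 := (hs (v:V)).ne'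
      simp only [h, if_pos rfl, hadj, if_neg, if_false, h2]
      field_simp
      rw [Real.sq_sqrt (by positivity)]; simp
    · simp only [h, if_neg, if_false]
      ring
  rw [Finset.sum_congr rfl (fun u _ => this u), Finset.sum_sub_distrib]
  congr 1
  simp [Subtype.coe_inj]

lemma const_of_reachable {W : Type} {H : SimpleGraph W} {f : W → ℝ}
    (h : ∀ a b : W, H.Adj a b → f a = f b) {u v : W} (hr : H.Reachable u v) :
    f u = f v := by
  obtain ⟨w⟩ := hr
  induction w with
  | nil => rfl
  | cons ha _ ih => exact (h _ _ ha).trans ih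

lemma nLapS_isUnit_det {V : Type} [Fintype V] [DecidableEq V] (G : SimpleGraph V)
    [DecidableRel G.Adj] (hdeg : ∀ v, 0 < G.degree v) (S : Finset V)
    (hconn : (G.induce (S : Set V)).Connected)
    (hbd : (vBdry G S).Nonempty) :
    IsUnit (nLapS G S).det := by
  rw [← Matrix.isUnit_iff_isUnit_det, ← Matrix.mulVec_injective_iff_isUnit]
  have hs : ∀ w : V, (0:ℝ) < Real.sqrt (G.degree w) := fun w =>
    Real.sqrt_pos.2 (by exact_mod_cast hdeg w)
  have ker : ∀ y : S → ℝ, (nLapS G S).mulVec y = 0 → y = 0 := by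
    intro y hy
    set a : S → S → ℝ := fun v u => if G.Adj (v:V) (u:V) then 1 else 0 with ha
    have ha_nonneg : ∀ v u : S, 0 ≤ a v u := by intro v u; simp only [ha]; positivity
    have ha_symm : ∀ v u : S, a v u = a u v := by
      intro v u; simp only [ha, SimpleGraph.adj_comm]
    set z : S → ℝ := fun v => (Real.sqrt (G.degree (v:V)))⁻¹ * y v with hz
    have hyz : ∀ v : S, y v = Real.sqrt (G.degree (v:V)) * z v := by
      intro v; simp only [hz]
      rw [← mul_assoc, mul_inv_cancel₀ (hs (v:V)).ne', one_mul]
    -- row sums bounded by degree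
    have hrow : ∀ v : S, (∑ u : S, a v u) ≤ (G.degree (v:V) : ℝ) := by
      intro v
      rw [Finset.sum_coe_sort S (fun u => if G.Adj (v:V) u then (1:ℝ) else 0)]
      have h1 : ∑ u ∈ S, (if G.Adj (v:V) u then (1:ℝ) else 0) ≤
          ∑ u ∈ Finset.univ, (if G.Adj (v:V) u then (1:ℝ) else 0) :=
        Finset.sum_le_sum_of_subset_of_nonneg (Finset.subset_univ S)
          (by intros; positivity)
      have h2 : ∑ u ∈ Finset.univ, (if G.Adj (v:V) u then (1:ℝ) else 0) =
          (G.degree (v:V) : ℝ) := by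
        rw [Finset.sum_boole]
        simp [SimpleGraph.degree, SimpleGraph.neighborFinset_eq_filter]
      rw [← h2]; exact h1
    -- quadratic form is zero
    have hQ : ∑ v : S, y v * (nLapS G S).mulVec y v = 0 := by
      simp [hy]
    have expand : ∑ v : S, y v * (nLapS G S).mulVec y v
        = ∑ v : S, (G.degree (v:V) : ℝ) * z v ^ 2
          - ∑ v : S, ∑ u : S, a v u * (z v * z u) := by
      rw [← Finset.sum_sub_distrib]
      refine Finset.sum_congr rfl fun v _ => ?_
      rw [nLapS_mulVec G hdeg S y v, mul_sub, Finset.mul_sum]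
      congr 1
      · rw [hyz v, show Real.sqrt ↑(G.degree (v:V)) * z v *
            (Real.sqrt ↑(G.degree (v:V)) * z v)
            = (Real.sqrt ↑(G.degree (v:V)) * Real.sqrt ↑(G.degree (v:V))) * z v ^ 2 by ring,
          Real.mul_self_sqrt (by positivity)]
      · refine Finset.sum_congr rfl fun u _ => ?_
        by_cases hadj : G.Adj (v:V) (u:V)
        · simp only [ha, if_pos hadj, one_mul]
          rw [hyz v, hyz u]
          field_simp [(hs (v:V)).ne', (hs (u:V)).ne']
        · simp [ha, hadj]
    have iden : ∑ v : S, (G.degree (v:V) : ℝ) * z v ^ 2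
          - ∑ v : S, ∑ u : S, a v u * (z v * z u)
        = (∑ v : S, ∑ u : S, a v u * (z v - z u) ^ 2) / 2
          + ∑ v : S, ((G.degree (v:V) : ℝ) - ∑ u : S, a v u) * z v ^ 2 := by
      have e1 : (∑ v : S, ∑ u : S, a v u * z u ^ 2)
          = ∑ v : S, ∑ u : S, a v u * z v ^ 2 := by
        rw [Finset.sum_comm]
        exact Finset.sum_congr rfl fun u _ => Finset.sum_congr rfl fun v _ => by
          rw [ha_symm]
      have e2 : (∑ v : S, ∑ u : S, a v u * (z v - z u) ^ 2)
          = (∑ v : S, ∑ u : S, a v u * z v ^ 2)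
            + (∑ v : S, ∑ u : S, a v u * z u ^ 2)
            - 2 * ∑ v : S, ∑ u : S, a v u * (z v * z u) := by
        simp only [← Finset.sum_add_distrib, ← Finset.sum_sub_distrib, Finset.mul_sum]
        exact Finset.sum_congr rfl fun v _ => Finset.sum_congr rfl fun u _ => by ring
      have e3 : (∑ v : S, ((G.degree (v:V) : ℝ) - ∑ u : S, a v u) * z v ^ 2)
          = (∑ v : S, (G.degree (v:V) : ℝ) * z v ^ 2)
            - ∑ v : S, ∑ u : S, a v u * z v ^ 2 := by
        rw [← Finset.sum_sub_distrib]
        exact Finset.sum_congr rfl fun v _ => by rw [sub_mul, Finset.sum_mul]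
      rw [e2, e1, e3]; ring
    rw [expand, iden] at hQ
    -- both parts are nonnegative
    have hnn1 : ∀ v : S, ∀ u : S, 0 ≤ a v u * (z v - z u) ^ 2 := by
      intro v u; have := ha_nonneg v u; positivity
    have hnn2 : ∀ v : S, 0 ≤ ((G.degree (v:V) : ℝ) - ∑ u : S, a v u) * z v ^ 2 := by
      intro v
      exact mul_nonneg (by linarith [hrow v]) (sq_nonneg _)
    have hA : (0:ℝ) ≤ (∑ v : S, ∑ u : S, a v u * (z v - z u) ^ 2) / 2 := by
      have : (0:ℝ) ≤ ∑ v : S, ∑ u : S, a v u * (z v - z u) ^ 2 :=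
        Finset.sum_nonneg fun v _ => Finset.sum_nonneg fun u _ => hnn1 v u
      linarith
    have hB : (0:ℝ) ≤ ∑ v : S, ((G.degree (v:V) : ℝ) - ∑ u : S, a v u) * z v ^ 2 :=
      Finset.sum_nonneg fun v _ => hnn2 v
    have hA0 : (∑ v : S, ∑ u : S, a v u * (z v - z u) ^ 2) = 0 := by
      nlinarith [hA, hB, hQ]
    have hB0 : (∑ v : S, ((G.degree (v:V) : ℝ) - ∑ u : S, a v u) * z v ^ 2) = 0 := by
      nlinarith [hA, hB, hQ]
    -- each term is zero
    have h1 : ∀ v : S, ∀ u : S, a v u * (z v - z u) ^ 2 = 0 := by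
      intro v u
      have houter := (Finset.sum_eq_zero_iff_of_nonneg
        (fun v _ => Finset.sum_nonneg fun u _ => hnn1 v u)).1 hA0 v (Finset.mem_univ v)
      exact (Finset.sum_eq_zero_iff_of_nonneg (fun u _ => hnn1 v u)).1 houter u
        (Finset.mem_univ u)
    have h2 : ∀ v : S, ((G.degree (v:V) : ℝ) - ∑ u : S, a v u) * z v ^ 2 = 0 :=
      fun v => (Finset.sum_eq_zero_iff_of_nonneg (fun v _ => hnn2 v)).1 hB0 v
        (Finset.mem_univ v)
    -- z is constant along edges inside S
    have hzadj : ∀ v u : S, G.Adj (v:V) (u:V) → z v = z u := by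
      intro v u hadj
      have := h1 v u
      rw [ha] at this
      simp only [if_pos hadj, one_mul] at this
      have := pow_eq_zero_iff (n := 2) (by norm_num) |>.1 this
      linarith [sub_eq_zero.1 this]
    -- a boundary vertex has z = 0
    obtain ⟨u0, hu0⟩ := hbd
    rw [vBdry, Finset.mem_filter] at hu0
    obtain ⟨-, hu0S, v0, hv0S, hadj0⟩ := hu0
    have hv0 : z ⟨v0, hv0S⟩ = 0 := by
      have hstrict : (∑ u : S, a ⟨v0, hv0S⟩ u) < (G.degree v0 : ℝ) := by
        rw [Finset.sum_coe_sort S (fun u => if G.Adj v0 u then (1:ℝ) else 0)]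
        have h2 : ∑ u ∈ Finset.univ, (if G.Adj v0 u then (1:ℝ) else 0) =
            (G.degree v0 : ℝ) := by
          rw [Finset.sum_boole]
          simp [SimpleGraph.degree, SimpleGraph.neighborFinset_eq_filter]
        rw [← h2]
        refine Finset.sum_lt_sum_of_subset (Finset.subset_univ S)
          (Finset.mem_univ u0) hu0S ?_ (by intros; positivity)
        rw [if_pos hadj0.symm]; norm_num
      have hterm := h2 ⟨v0, hv0S⟩
      have hne : ((G.degree ((⟨v0, hv0S⟩ : S) : V) : ℝ)
          - ∑ u : S, a ⟨v0, hv0S⟩ u) ≠ 0 := ne_of_gt (by linarith)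
      rcases mul_eq_zero.1 hterm with h | h
      · exact absurd h hne
      · exact pow_eq_zero_iff (n := 2) (by norm_num) |>.1 h
    -- z is zero everywhere by connectivity
    have hz0 : ∀ v : S, z v = 0 := by
      intro v
      set f : ↥((S : Set V)) → ℝ := fun w => z ⟨w.1, by simpa using w.2⟩ with hf
      have hfa : ∀ a b : ↥((S : Set V)), (G.induce (S : Set V)).Adj a b → f a = f b := by
        intro a b hab
        exact hzadj _ _ hab
      have hr := hconn.preconnected ⟨(v:V), by simpa using v.2⟩ ⟨v0, by simpa using hv0S⟩
      have := const_of_reachable hfa hr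
      simpa [hf, hv0] using this
    funext v
    rw [hyz v, hz0 v, mul_zero]
    rfl
  intro y1 y2 h
  have := ker (y1 - y2) (by rw [Matrix.mulVec_sub, h, sub_self])
  exact sub_eq_zero.1 this


/-- if `x` solves `ℒx = b` with boundary condition `b` and `S` is a
`b`-boundable subset, then `x_S = ℒ_S⁻¹ b₁`. -/
theorem local_solution_eq_inv_mulVec {V : Type} [Fintype V] [DecidableEq V]
    (G : SimpleGraph V) [DecidableRel G.Adj]
    (hdeg : ∀ v, 0 < G.degree v)
    (b : V → ℝ) (hb : b ≠ 0)
    (S : Finset V)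
    (hsupp : ∀ v ∈ S, b v = 0)
    (hbsupp : ∃ u ∈ vBdry G S, b u ≠ 0)
    (hconn : (G.induce (S : Set V)).Connected)
    (hbd : (vBdry G S).Nonempty)
    (x : V → ℝ)
    (hx : ∀ v ∈ S, x v = ∑ u ∈ G.neighborFinset v,
      x u / Real.sqrt ((G.degree v) * (G.degree u)))
    (hxb : ∀ v ∉ S, x v = b v) :
    (fun v : S => x v) = (nLapS G S)⁻¹.mulVec (bOne G S b) := by
  have hM : (nLapS G S).mulVec (fun v : S => x v) = bOne G S b := by
    funext v
    rw [nLapS_mulVec G hdeg S _ v]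
    show x (v:V) - _ = _
    have hsplit := hx (v:V) v.2
    have e1 : (∑ u : S, (if G.Adj (v:V) (u:V) then 1 else 0) * x (u:V) /
        (Real.sqrt (G.degree (v:V)) * Real.sqrt (G.degree (u:V))))
        = ∑ u ∈ (G.neighborFinset (v:V)).filter (· ∈ S),
            x u / Real.sqrt ((G.degree (v:V)) * (G.degree u)) := by
      rw [Finset.sum_coe_sort S (fun u => (if G.Adj (v:V) u then (1:ℝ) else 0) * x u /
        (Real.sqrt (G.degree (v:V)) * Real.sqrt (G.degree u)))]
      rw [show (G.neighborFinset (v:V)).filter (· ∈ S)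
          = S.filter (fun u => G.Adj (v:V) u) by
        ext u; simp [SimpleGraph.mem_neighborFinset, and_comm]]
      rw [Finset.sum_filter]
      refine Finset.sum_congr rfl fun u hu => ?_
      by_cases hadj : G.Adj (v:V) u
      · rw [if_pos hadj, if_pos hadj, one_mul, Real.sqrt_mul (by positivity)]
      · simp [hadj]
    have e2 : bOne G S b v = ∑ u ∈ (G.neighborFinset (v:V)).filter (· ∉ S),
        x u / Real.sqrt ((G.degree (v:V)) * (G.degree u)) := by
      rw [show bOne G S b v = ∑ u ∈ (vBdry G S).filter (fun u => G.Adj u (v:V)),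
          b u / Real.sqrt ((G.degree (v:V)) * (G.degree u)) from rfl]
      rw [show (vBdry G S).filter (fun u => G.Adj u (v:V)) =
          (G.neighborFinset (v:V)).filter (· ∉ S) by
        ext u
        simp only [vBdry, Finset.mem_filter, Finset.mem_univ, true_and,
          SimpleGraph.mem_neighborFinset]
        constructor
        · rintro ⟨⟨h1, -⟩, h2⟩; exact ⟨h2.symm, h1⟩
        · rintro ⟨h1, h2⟩; exact ⟨⟨h2, ⟨(v:V), v.2, h1.symm⟩⟩, h1.symm⟩]
      refine Finset.sum_congr rfl fun u hu => ?_
      rw [hxb u (Finset.mem_filter.1 hu).2]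
    rw [hsplit, e1, e2,
      ← Finset.sum_filter_add_sum_filter_not (G.neighborFinset (v:V)) (· ∈ S)
        (fun u => x u / Real.sqrt ((G.degree (v:V)) * (G.degree u)))]
    ring
  have hdet := nLapS_isUnit_det G hdeg S hconn hbd
  have hinv := Matrix.nonsing_inv_mul (nLapS G S) hdet
  calc (fun v : S => x v) = (1 : Matrix S S ℝ).mulVec (fun v : S => x v) := by
        rw [Matrix.one_mulVec]
    _ = ((nLapS G S)⁻¹ * nLapS G S).mulVec (fun v : S => x v) := by rw [hinv]
    _ = (nLapS G S)⁻¹.mulVec ((nLapS G S).mulVec (fun v : S => x v)) := by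
        rw [← Matrix.mulVec_mulVec]
    _ = (nLapS G S)⁻¹.mulVec (bOne G S b) := by rw [hM]
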